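/- (Corollary 1, unbiasedness of the imputation-based estimating function.) For every integrable real-valued measurable function g of (Y, V), E[R · (g(Y, V) − E[g(Y, V) | V]) + (1 − R) · (E[g(Y, V) | V] − E[g(Y, V) | V, L])] = 0. -/

import Mathlib

open MeasureTheory ProbabilityTheory

/-- **Corollary 1.** Unbiasedness of the imputation-based estimating function:
`E[R (g(Y,V) − E[g(Y,V)|V]) + (1 − R) (E[g(Y,V)|V] − E[g(Y,V)|V,L])] = 0`. -/
theorem imputation_estimating_function_unbiased
    {Ω : Type*} {mΩ : MeasurableSpace Ω} [StandardBorelSpace Ω] [Nonempty Ω]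
    {P : Measure Ω} [IsProbabilityMeasure P]
    {𝒱 𝓛 𝒴 : Type*} [m𝒱 : MeasurableSpace 𝒱] [m𝓛 : MeasurableSpace 𝓛]
    [m𝒴 : MeasurableSpace 𝒴]
    (V : Ω → 𝒱) (L : Ω → 𝓛) (Y : Ω → 𝒴)
    (hV : Measurable V) (hL : Measurable L) (hY : Measurable Y)
    (R : Ω → ℝ) (hR : Measurable R) (hR01 : ∀ ω, R ω = 0 ∨ R ω = 1)
    (π : 𝒱 → ℝ) (hπ : Measurable π)
    -- `π(V)` is a version of `E[R | σ(V)]`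
    (hπV : P[R | MeasurableSpace.comap V m𝒱] =ᵐ[P] fun ω => π (V ω))
    -- positivity
    (δ : ℝ) (hδ0 : 0 < δ) (hδhalf : δ < 1 / 2)
    (hpos : ∀ᵐ ω ∂P, δ ≤ π (V ω) ∧ π (V ω) ≤ 1 - δ)
    -- ignorability: `R ⟂ (Y, L) | σ(V)`
    (hign : CondIndepFun (MeasurableSpace.comap V m𝒱) (hV.comap_le) R
      (fun ω => (Y ω, L ω)) P)
    (g : 𝒴 × 𝒱 → ℝ) (hg : Measurable g)
    (hgint : Integrable (fun ω => g (Y ω, V ω)) P) :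
    ∫ ω, (R ω * (g (Y ω, V ω)
            - (P[fun ω' => g (Y ω', V ω') | MeasurableSpace.comap V m𝒱]) ω)
        + (1 - R ω)
          * ((P[fun ω' => g (Y ω', V ω') | MeasurableSpace.comap V m𝒱]) ω
            - (P[fun ω' => g (Y ω', V ω')
                | MeasurableSpace.comap (fun ω' => (V ω', L ω')) inferInstance]) ω)) ∂P
      = 0 := by
  classical
  set W : Ω → 𝒴 × 𝓛 := fun ω => (Y ω, L ω) with hWdef
  have hWm : Measurable W := hY.prodMk hL
  set U : Ω → 𝒱 × (𝒴 × 𝓛) := fun ω => (V ω, W ω) with hUdef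
  have hUm : Measurable U := hV.prodMk hWm
  set mV : MeasurableSpace Ω := MeasurableSpace.comap V m𝒱 with hmVdef
  have hmV : mV ≤ mΩ := hV.comap_le
  set mVL : MeasurableSpace Ω :=
    MeasurableSpace.comap (fun ω' => (V ω', L ω')) inferInstance with hmVLdef
  have hmVL : mVL ≤ mΩ := (hV.prodMk hL).comap_le
  set M : MeasurableSpace Ω := MeasurableSpace.comap U inferInstance with hMdef
  have hM : M ≤ mΩ := hUm.comap_le
  letI : MeasurableSpace Ω := mΩ
  have hUM : Measurable[M] U := Measurable.of_comap_le le_rfl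
  have hVM : Measurable[M] V := measurable_fst.comp hUM
  have hWM : Measurable[M] W := measurable_snd.comp hUM
  have hYM : Measurable[M] Y := measurable_fst.comp hWM
  have hLM : Measurable[M] L := measurable_snd.comp hWM
  have hmV_le_M : mV ≤ M := hVM.comap_le
  have hmVL_le_M : mVL ≤ M := (hVM.prodMk hLM).comap_le
  set πV : Ω → ℝ := fun ω => π (V ω) with hπVdef
  have hπVmV : Measurable[mV] πV := hπ.comp (Measurable.of_comap_le le_rfl)
  have hπVM : Measurable[M] πV := hπ.comp hVM
  have hπVmVL : Measurable[mVL] πV :=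
    hπ.comp (measurable_fst.comp (Measurable.of_comap_le le_rfl))
  -- boundedness facts
  have hπVbd : ∀ᵐ ω ∂P, ‖πV ω‖ ≤ 1 := by
    filter_upwards [hpos] with ω hω
    rw [Real.norm_eq_abs, abs_le]
    constructor <;> nlinarith [hω.1, hω.2]
  have hRbd : ∀ ω, ‖R ω‖ ≤ 1 := fun ω => by
    rcases hR01 ω with h | h <;> simp [h]
  have hRint : Integrable R P :=
    (integrable_const (1 : ℝ)).mono' hR.aestronglyMeasurable
      (Filter.Eventually.of_forall hRbd)
  have hπVint : Integrable πV P :=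
    (integrable_const (1 : ℝ)).mono' (hπ.comp hV).aestronglyMeasurable hπVbd
  set gYV : Ω → ℝ := fun ω => g (Y ω, V ω) with hgYVdef
  set F : Ω → ℝ := P[gYV | mV] with hFdef
  set G : Ω → ℝ := P[gYV | mVL] with hGdef
  have hFint : Integrable F P := integrable_condExp
  have hGint : Integrable G P := integrable_condExp
  have hgYVM : Measurable[M] gYV := hg.comp (hYM.prodMk hVM)
  -- Generating π-system for `M`
  set S : Set (Set Ω) := Set.preimage U ''
      Set.image2 (· ×ˢ ·) {s : Set 𝒱 | MeasurableSet s}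
        {t : Set (𝒴 × 𝓛) | MeasurableSet t} with hSdef
  have hMeq : M = MeasurableSpace.generateFrom S := by
    rw [hMdef]
    calc MeasurableSpace.comap U inferInstance
        = MeasurableSpace.comap U (MeasurableSpace.generateFrom
            (Set.image2 (· ×ˢ ·) {s : Set 𝒱 | MeasurableSet s}
              {t : Set (𝒴 × 𝓛) | MeasurableSet t})) := by
          rw [generateFrom_prod]
      _ = MeasurableSpace.generateFrom S := MeasurableSpace.comap_generateFrom
  have hpi : IsPiSystem S := by
    rintro _ ⟨_, ⟨a1, ha1, b1, hb1, rfl⟩, rfl⟩ _ ⟨_, ⟨a2, ha2, b2, hb2, rfl⟩, rfl⟩ -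
    simp only [Set.mem_setOf_eq] at ha1 hb1 ha2 hb2
    refine ⟨(a1 ∩ a2) ×ˢ (b1 ∩ b2),
      ⟨a1 ∩ a2, ha1.inter ha2, b1 ∩ b2, hb1.inter hb2, rfl⟩, ?_⟩
    rw [← Set.preimage_inter, Set.prod_inter_prod]
  -- global equality of integrals
  have hglobal : ∫ ω, πV ω ∂P = ∫ ω, R ω ∂P :=
    ((integral_congr_ae hπV).symm).trans (integral_condExp hmV)
  -- the rectangle case
  have hbase : ∀ t ∈ S, ∫ ω in t, πV ω ∂P = ∫ ω in t, R ω ∂P := by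
    rintro _ ⟨_, ⟨a, ha, b, hb, rfl⟩, rfl⟩
    have hpre : U ⁻¹' (a ×ˢ b) = (V ⁻¹' a) ∩ (W ⁻¹' b) := by
      rw [hUdef]; exact Set.mk_preimage_prod V W
    rw [hpre]
    simp only [Set.mem_setOf_eq] at ha hb
    have hWb : MeasurableSet[mΩ] (W ⁻¹' b) := hWm hb
    have haV : MeasurableSet[mV] (V ⁻¹' a) := ⟨a, ha, rfl⟩
    set ind : Ω → ℝ := Set.indicator (W ⁻¹' b) (fun _ => (1 : ℝ)) with hinddef
    have hind_bd : ∀ ω, ‖ind ω‖ ≤ 1 := by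
      intro ω
      by_cases h : ω ∈ W ⁻¹' b <;> simp [hinddef, h]
    have hind_meas : Measurable[mΩ] ind := measurable_const.indicator hWb
    have hind_int : Integrable ind P :=
      (integrable_const (μ := P) (1 : ℝ)).mono' hind_meas.aestronglyMeasurable
        (Filter.Eventually.of_forall hind_bd)
    have hπind_int : Integrable (πV * ind) P :=
      (integrable_const (μ := P) (1 : ℝ)).mono'
        (((hπ.comp hV).aestronglyMeasurable).mul hind_int.1)
        (by
          filter_upwards [hπVbd] with ω h
          simp only [Pi.mul_apply, norm_mul]
          exact (mul_le_of_le_one_right (norm_nonneg _) (hind_bd ω)).trans h)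
    have hRind_int : Integrable (R * ind) P :=
      (integrable_const (μ := P) (1 : ℝ)).mono'
        (hR.aestronglyMeasurable.mul hind_int.1)
        (Filter.Eventually.of_forall fun ω => by
          simp only [Pi.mul_apply, norm_mul]
          exact (mul_le_of_le_one_right (norm_nonneg _) (hind_bd ω)).trans (hRbd ω))
    have hindmulπ : Set.indicator (W ⁻¹' b) πV = πV * ind := by
      funext ω; by_cases h : ω ∈ W ⁻¹' b <;> simp [hinddef, h]
    have hindmulR : Set.indicator (W ⁻¹' b) R = R * ind := by
      funext ω; by_cases h : ω ∈ W ⁻¹' b <;> simp [hinddef, h]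
    have hRindicator : R = Set.indicator (R ⁻¹' {1}) (fun _ => (1 : ℝ)) := by
      funext ω; rcases hR01 ω with h | h <;> simp [Set.indicator_apply, h]
    have hRmulind : R * ind
        = Set.indicator ((R ⁻¹' {1}) ∩ (W ⁻¹' b)) (fun _ => (1 : ℝ)) := by
      funext ω
      by_cases hw : ω ∈ W ⁻¹' b
      · rcases hR01 ω with h | h <;> simp [hinddef, Set.indicator_apply, hw, h]
      · simp [hinddef, Set.indicator_apply, hw]
    have hCI := (condIndepFun_iff mV hmV R W hR hWm P).mp hign (R ⁻¹' {1}) (W ⁻¹' b)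
      ⟨{1}, measurableSet_singleton 1, rfl⟩ ⟨b, hb, rfl⟩
    have hmul1 : P[πV * ind|mV] =ᵐ[P] πV * P[ind|mV] :=
      condExp_mul_of_stronglyMeasurable_left hπVmV.stronglyMeasurable hπind_int hind_int
    have hmul2 : P[R * ind|mV] =ᵐ[P] πV * P[ind|mV] := by
      have h1 : P[R * ind|mV]
          =ᵐ[P] P[Set.indicator ((R ⁻¹' {1}) ∩ (W ⁻¹' b)) (fun _ => (1 : ℝ))|mV] :=
        condExp_congr_ae (Filter.Eventually.of_forall fun ω => congrFun hRmulind ω)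
      have h2 : P[Set.indicator (R ⁻¹' {1}) (fun _ => (1 : ℝ))|mV] =ᵐ[P] πV :=
        (condExp_congr_ae (Filter.Eventually.of_forall fun ω =>
          (congrFun hRindicator ω).symm)).trans hπV
      refine h1.trans (hCI.trans ?_)
      filter_upwards [h2] with ω e2
      simp only [Pi.mul_apply]
      rw [e2]
    calc ∫ ω in V ⁻¹' a ∩ W ⁻¹' b, πV ω ∂P
        = ∫ ω in V ⁻¹' a, Set.indicator (W ⁻¹' b) πV ω ∂P :=
          (setIntegral_indicator hWb).symm
      _ = ∫ ω in V ⁻¹' a, (πV * ind) ω ∂P := by rw [hindmulπ]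
      _ = ∫ ω in V ⁻¹' a, (P[πV * ind|mV]) ω ∂P :=
          (setIntegral_condExp hmV hπind_int haV).symm
      _ = ∫ ω in V ⁻¹' a, (πV * P[ind|mV]) ω ∂P :=
          integral_congr_ae (ae_restrict_of_ae hmul1)
      _ = ∫ ω in V ⁻¹' a, (P[R * ind|mV]) ω ∂P :=
          (integral_congr_ae (ae_restrict_of_ae hmul2)).symm
      _ = ∫ ω in V ⁻¹' a, (R * ind) ω ∂P := setIntegral_condExp hmV hRind_int haV
      _ = ∫ ω in V ⁻¹' a, Set.indicator (W ⁻¹' b) R ω ∂P := by rw [hindmulR]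
      _ = ∫ ω in V ⁻¹' a ∩ W ⁻¹' b, R ω ∂P := setIntegral_indicator hWb
  -- set integral equality on all of `M`
  have hsetEq : ∀ s : Set Ω, MeasurableSet[M] s →
      ∫ ω in s, πV ω ∂P = ∫ ω in s, R ω ∂P := by
    intro s hs
    refine MeasurableSpace.induction_on_inter (m := M)
      (C := fun s _ => ∫ ω in s, πV ω ∂P = ∫ ω in s, R ω ∂P) hMeq hpi (by simp)
      hbase ?_ ?_ s hs
    · intro t htM ht
      have ht' : MeasurableSet[mΩ] t := hM t htM
      have h1 := integral_add_compl ht' hπVint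
      have h2 := integral_add_compl ht' hRint
      linarith [hglobal]
    · intro f hdisj hmeas hih
      have hm' : ∀ i, MeasurableSet[mΩ] (f i) := fun i => hM _ (hmeas i)
      rw [integral_iUnion hm' hdisj hπVint.integrableOn,
        integral_iUnion hm' hdisj hRint.integrableOn]
      exact tsum_congr hih
  -- master fact: `π(V)` is a version of `E[R | M]`
  have hcondR : πV =ᵐ[P] P[R|M] :=
    ae_eq_condExp_of_forall_setIntegral_eq hM hRint
      (fun s _ _ => hπVint.integrableOn) (fun s hs _ => hsetEq s hs)
      (hπVM.stronglyMeasurable.aestronglyMeasurable)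
  -- key pull-out identity
  have key : ∀ F' : Ω → ℝ, Integrable F' P → StronglyMeasurable[M] F' →
      ∫ ω, R ω * F' ω ∂P = ∫ ω, πV ω * F' ω ∂P := by
    intro F' hFi hFs
    have h1 : Integrable (F' * R) P :=
      hFi.norm.mono' ((hFs.mono hM).aestronglyMeasurable.mul hR.aestronglyMeasurable)
        (Filter.Eventually.of_forall fun ω => by
          simp only [Pi.mul_apply, norm_mul]
          exact mul_le_of_le_one_right (norm_nonneg _) (hRbd ω))
    have h2 : P[F' * R|M] =ᵐ[P] F' * P[R|M] :=
      condExp_mul_of_stronglyMeasurable_left hFs h1 hRint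
    calc ∫ ω, R ω * F' ω ∂P = ∫ ω, (F' * R) ω ∂P :=
          integral_congr_ae (Filter.Eventually.of_forall fun ω => mul_comm (R ω) (F' ω))
      _ = ∫ ω, (P[F' * R|M]) ω ∂P := (integral_condExp hM).symm
      _ = ∫ ω, (F' * P[R|M]) ω ∂P := integral_congr_ae h2
      _ = ∫ ω, πV ω * F' ω ∂P := by
          refine integral_congr_ae ?_
          filter_upwards [hcondR] with ω h
          simp only [Pi.mul_apply, ← h]
          ring
  have hπg_int : Integrable (πV * gYV) P :=
    hgint.norm.mono' ((hπ.comp hV).aestronglyMeasurable.mul hgint.1)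
      (by
        filter_upwards [hπVbd] with ω h
        simp only [Pi.mul_apply, norm_mul]
        exact mul_le_of_le_one_left (norm_nonneg _) h)
  have hpullV : ∫ ω, πV ω * gYV ω ∂P = ∫ ω, πV ω * F ω ∂P := by
    have h2 : P[πV * gYV|mV] =ᵐ[P] πV * F :=
      condExp_mul_of_stronglyMeasurable_left hπVmV.stronglyMeasurable hπg_int hgint
    calc ∫ ω, πV ω * gYV ω ∂P = ∫ ω, (P[πV * gYV|mV]) ω ∂P := (integral_condExp hmV).symm
      _ = ∫ ω, πV ω * F ω ∂P := integral_congr_ae h2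
  have hpullVL : ∫ ω, πV ω * gYV ω ∂P = ∫ ω, πV ω * G ω ∂P := by
    have h2 : P[πV * gYV|mVL] =ᵐ[P] πV * G :=
      condExp_mul_of_stronglyMeasurable_left hπVmVL.stronglyMeasurable hπg_int hgint
    calc ∫ ω, πV ω * gYV ω ∂P = ∫ ω, (P[πV * gYV|mVL]) ω ∂P := (integral_condExp hmVL).symm
      _ = ∫ ω, πV ω * G ω ∂P := integral_congr_ae h2
  have hFM : StronglyMeasurable[M] F := stronglyMeasurable_condExp.mono hmV_le_M
  have hGM : StronglyMeasurable[M] G := stronglyMeasurable_condExp.mono hmVL_le_M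
  have e1 : ∫ ω, R ω * gYV ω ∂P = ∫ ω, πV ω * gYV ω ∂P :=
    key gYV hgint hgYVM.stronglyMeasurable
  have e2 : ∫ ω, R ω * F ω ∂P = ∫ ω, πV ω * F ω ∂P := key F hFint hFM
  have e3 : ∫ ω, R ω * G ω ∂P = ∫ ω, πV ω * G ω ∂P := key G hGint hGM
  have e4 : ∫ ω, F ω ∂P = ∫ ω, gYV ω ∂P := integral_condExp hmV
  have e5 : ∫ ω, G ω ∂P = ∫ ω, gYV ω ∂P := integral_condExp hmVL
  have hRg_int : Integrable (fun ω => R ω * gYV ω) P :=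
    hgint.norm.mono' (hR.aestronglyMeasurable.mul hgint.1)
      (Filter.Eventually.of_forall fun ω => by
        simp only [norm_mul]
        exact mul_le_of_le_one_left (norm_nonneg _) (hRbd ω))
  have hRF_int : Integrable (fun ω => R ω * F ω) P :=
    hFint.norm.mono' (hR.aestronglyMeasurable.mul hFint.1)
      (Filter.Eventually.of_forall fun ω => by
        simp only [norm_mul]
        exact mul_le_of_le_one_left (norm_nonneg _) (hRbd ω))
  have hRG_int : Integrable (fun ω => R ω * G ω) P :=
    hGint.norm.mono' (hR.aestronglyMeasurable.mul hGint.1)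
      (Filter.Eventually.of_forall fun ω => by
        simp only [norm_mul]
        exact mul_le_of_le_one_left (norm_nonneg _) (hRbd ω))
  have hA_int : Integrable (fun ω => R ω * (gYV ω - F ω)) P := by
    have h : (fun ω => R ω * (gYV ω - F ω))
        = fun ω => R ω * gYV ω - R ω * F ω := by funext ω; ring
    rw [h]; exact hRg_int.sub hRF_int
  have hB_int : Integrable (fun ω => (1 - R ω) * (F ω - G ω)) P := by
    have h : (fun ω => (1 - R ω) * (F ω - G ω))
        = fun ω => (F ω - G ω) - (R ω * F ω - R ω * G ω) := by funext ω; ring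
    rw [h]; exact (hFint.sub hGint).sub (hRF_int.sub hRG_int)
  have hAeq : ∫ ω, R ω * (gYV ω - F ω) ∂P = 0 := by
    have h1 : ∫ ω, R ω * (gYV ω - F ω) ∂P
        = ∫ ω, (R ω * gYV ω - R ω * F ω) ∂P :=
      integral_congr_ae (Filter.Eventually.of_forall fun ω => by ring)
    rw [h1, integral_sub hRg_int hRF_int, e1, e2, hpullV, sub_self]
  have hBeq : ∫ ω, (1 - R ω) * (F ω - G ω) ∂P = 0 := by
    have h1 : ∫ ω, (1 - R ω) * (F ω - G ω) ∂P
        = ∫ ω, ((F ω - G ω) - (R ω * F ω - R ω * G ω)) ∂P :=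
      integral_congr_ae (Filter.Eventually.of_forall fun ω => by ring)
    have hFG_int : Integrable (fun ω => F ω - G ω) P := hFint.sub hGint
    have hRFG_int : Integrable (fun ω => R ω * F ω - R ω * G ω) P := hRF_int.sub hRG_int
    have hFint' : Integrable (fun ω => F ω) P := hFint
    have hGint' : Integrable (fun ω => G ω) P := hGint
    rw [h1, integral_sub hFG_int hRFG_int,
      integral_sub hFint' hGint', integral_sub hRF_int hRG_int,
      e2, e3, e4, e5, ← hpullV, ← hpullVL]
    ring
  show ∫ ω, (R ω * (gYV ω - F ω) + (1 - R ω) * (F ω - G ω)) ∂P = 0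
  rw [integral_add hA_int hB_int, hAeq, hBeq, add_zero]
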